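/- arXiv:1911.01089 — 2 statements merged into one kernel-verified Lean document; each statement's English description precedes it below -/
import Mathlib

section
/- Let p be a prime and let A be a complete discrete valuation ring of characteristic p with residue field F_p. Then A is isomorphic as a ring to the formal power series ring F_p[[X]]. -/
/-- A complete discrete valuation ring of characteristic `p` with residue field `F_p`
is isomorphic as a ring to the formal power series ring `F_p[[X]]`. -/
theorem stmt7 (p : ℕ) (hp : p.Prime) (A : Type*) [CommRing A] [IsDomain A]
    [IsDiscreteValuationRing A] [CharP A p]
    [IsAdicComplete (IsLocalRing.maximalIdeal A) A]
    (hres : Nonempty (IsLocalRing.ResidueField A ≃+* ZMod p)) :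
    Nonempty (A ≃+* PowerSeries (ZMod p)) := by
  classical
  obtain ⟨e⟩ := hres
  obtain ⟨π, hπ⟩ := IsDiscreteValuationRing.exists_irreducible A
  set I : Ideal A := IsLocalRing.maximalIdeal A with hI
  have hspan : I = Ideal.span {π} :=
    (IsDiscreteValuationRing.irreducible_iff_uniformizer π).mp hπ
  set c : ZMod p →+* A := ZMod.castHom (dvd_refl p) A with hc
  -- key compatibility : e (residue (c y)) = y
  have he : ∀ y : ZMod p, e (IsLocalRing.residue A (c y)) = y := by
    have h : (e : IsLocalRing.ResidueField A →+* ZMod p).comp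
        ((IsLocalRing.residue A).comp c) = RingHom.id (ZMod p) :=
      Subsingleton.elim _ _
    intro y
    exact RingHom.congr_fun h y
  -- the partial-sum map
  set S : PowerSeries (ZMod p) → ℕ → A :=
    fun f n => Polynomial.eval₂ c π (PowerSeries.trunc n f) with hS
  have hSsum : ∀ f n, S f n = ∑ i ∈ Finset.range n, c (PowerSeries.coeff i f) * π ^ i := by
    intro f n
    simpa [hS] using PowerSeries.eval₂_trunc_eq_sum_range π c n f
  -- key congruence lemma for polynomials
  have key : ∀ (P : Polynomial (ZMod p)) (n : ℕ),
      Polynomial.eval₂ c π P - Polynomial.eval₂ c π (PowerSeries.trunc n (↑P)) ∈ I ^ n := by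
    intro P n
    obtain ⟨Q, hQ⟩ : (Polynomial.X ^ n : Polynomial (ZMod p)) ∣
        P - PowerSeries.trunc n (↑P) := by
      rw [Polynomial.X_pow_dvd_iff]
      intro d hd
      simp [Polynomial.coeff_sub, PowerSeries.coeff_trunc, hd, Polynomial.coeff_coe]
    have hcalc : Polynomial.eval₂ c π P - Polynomial.eval₂ c π (PowerSeries.trunc n (↑P))
        = π ^ n * Polynomial.eval₂ c π Q := by
      rw [← Polynomial.eval₂_sub, hQ, Polynomial.eval₂_mul, Polynomial.eval₂_X_pow]
    rw [hcalc, hspan, Ideal.span_singleton_pow, Ideal.mem_span_singleton]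
    exact dvd_mul_right _ _
  -- Cauchy property
  have hCauchy : ∀ f : PowerSeries (ZMod p), ∀ {m n : ℕ}, m ≤ n → S f n - S f m ∈ I ^ m := by
    intro f m n hmn
    have := key (PowerSeries.trunc n f) m
    rwa [PowerSeries.trunc_trunc_of_le f hmn] at this
  -- existence of limits
  have exL : ∀ f : PowerSeries (ZMod p), ∃ L : A, ∀ n, S f n - L ∈ I ^ n := by
    intro f
    obtain ⟨L, hL⟩ := IsPrecomplete.prec' (I := I) (fun n => S f n) (by
      intro m n hmn
      rw [SModEq.sub_mem, smul_eq_mul, Ideal.mul_top]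
      simpa using (I ^ m).neg_mem (hCauchy f hmn))
    refine ⟨L, fun n => ?_⟩
    have := hL n
    rwa [SModEq.sub_mem, smul_eq_mul, Ideal.mul_top] at this
  set L : PowerSeries (ZMod p) → A := fun f => (exL f).choose with hLdef
  have hL : ∀ f n, S f n - L f ∈ I ^ n := fun f => (exL f).choose_spec
  -- Hausdorff property
  have haus : ∀ x : A, (∀ n, x ∈ I ^ n) → x = 0 := by
    intro x hx
    refine IsHausdorff.haus' (I := I) x fun n => ?_
    rw [SModEq.zero, smul_eq_mul, Ideal.mul_top]
    exact hx n
  -- uniqueness of limits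
  have uniq : ∀ f a, (∀ n, S f n - a ∈ I ^ n) → L f = a := by
    intro f a h
    have h0 : L f - a = 0 := by
      refine haus _ fun n => ?_
      have := (I ^ n).sub_mem (h n) (hL f n)
      simpa using this
    exact sub_eq_zero.mp h0
  -- membership of high powers
  have hpow : ∀ (x : A) (i n : ℕ), n ≤ i → x * π ^ i ∈ I ^ n := by
    intro x i n hni
    rw [hspan, Ideal.span_singleton_pow, Ideal.mem_span_singleton]
    exact Dvd.dvd.mul_left (pow_dvd_pow π hni) x
  -- the ring hom
  set φ : PowerSeries (ZMod p) →+* A :=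
    { toFun := L
      map_one' := by
        refine uniq 1 1 fun n => ?_
        cases n with
        | zero => simp
        | succ m =>
          have : S 1 (m + 1) = 1 := by
            rw [hS]
            simp [PowerSeries.trunc_one]
          rw [this]
          simp
      map_mul' := by
        intro f g
        refine uniq (f * g) (L f * L g) fun n => ?_
        have h1 : S (f * g) n - S f n * S g n ∈ I ^ n := by
          have hmul : S f n * S g n =
              Polynomial.eval₂ c π (PowerSeries.trunc n f * PowerSeries.trunc n g) := by
            rw [hS]; simp [Polynomial.eval₂_mul]
          have := key (PowerSeries.trunc n f * PowerSeries.trunc n g) n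
          rw [← hmul] at this
          have htr : PowerSeries.trunc n
              ((↑(PowerSeries.trunc n f * PowerSeries.trunc n g) : PowerSeries (ZMod p)))
              = PowerSeries.trunc n (f * g) := by
            push_cast
            exact PowerSeries.trunc_trunc_mul_trunc f g
          rw [htr] at this
          simpa using (I ^ n).neg_mem this
        have h2 : S f n * S g n - L f * L g ∈ I ^ n := by
          have hf := hL f n
          have hg := hL g n
          have : S f n * S g n - L f * L g
              = (S f n - L f) * S g n + L f * (S g n - L g) := by ring
          rw [this]
          exact (I ^ n).add_mem (Ideal.mul_mem_right _ _ hf) (Ideal.mul_mem_left _ _ hg)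
        simpa using (I ^ n).add_mem h1 h2
      map_zero' := by
        refine uniq 0 0 fun n => ?_
        rw [hS]
        simp
      map_add' := by
        intro f g
        refine uniq (f + g) (L f + L g) fun n => ?_
        have hadd : S (f + g) n = S f n + S g n := by
          rw [hS]
          simp [map_add, Polynomial.eval₂_add]
        rw [hadd]
        have : S f n + S g n - (L f + L g) = (S f n - L f) + (S g n - L g) := by ring
        rw [this]
        exact (I ^ n).add_mem (hL f n) (hL g n) } with hφ
  have hπ0 : π ≠ 0 := hπ.ne_zero
  -- injectivity
  have hinj : Function.Injective φ := by
    rw [injective_iff_map_eq_zero]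
    intro f hf0
    have hf : ∀ n, S f n ∈ I ^ n := by
      intro n
      have := hL f n
      have hLf : L f = 0 := hf0
      rwa [hLf, sub_zero] at this
    ext i
    rw [map_zero]
    induction i using Nat.strong_induction_on with
    | _ i ih =>
      have hSsucc : S f (i + 1) = c (PowerSeries.coeff i f) * π ^ i := by
        rw [hSsum]
        rw [Finset.sum_range_succ]
        have : ∀ j ∈ Finset.range i, c (PowerSeries.coeff j f) * π ^ j = 0 := by
          intro j hj
          rw [ih j (Finset.mem_range.mp hj), map_zero, zero_mul]
        rw [Finset.sum_eq_zero this, zero_add]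
      have hmem := hf (i + 1)
      rw [hSsucc, hspan, Ideal.span_singleton_pow, Ideal.mem_span_singleton] at hmem
      obtain ⟨t, ht⟩ := hmem
      have hc0 : c (PowerSeries.coeff i f) = π * t := by
        have hi : (π ^ i : A) ≠ 0 := pow_ne_zero i hπ0
        apply mul_right_cancel₀ hi
        rw [ht, pow_succ]; ring
      have hmemI : c (PowerSeries.coeff i f) ∈ I := by
        rw [hc0, hspan]
        exact Ideal.mul_mem_right _ _ (Ideal.mem_span_singleton_self π)
      have hres0 : IsLocalRing.residue A (c (PowerSeries.coeff i f)) = 0 :=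
        Ideal.Quotient.eq_zero_iff_mem.mpr hmemI
      have := he (PowerSeries.coeff i f)
      rw [hres0, map_zero] at this
      exact this.symm
  -- surjectivity
  have hsurj : Function.Surjective φ := by
    intro a
    -- digit extraction
    have step : ∀ b : A, ∃ b' : A, b = c (e (IsLocalRing.residue A b)) + π * b' := by
      intro b
      have hmem : b - c (e (IsLocalRing.residue A b)) ∈ I := by
        have hz : IsLocalRing.residue A (b - c (e (IsLocalRing.residue A b))) = 0 := by
          apply e.injective
          rw [map_sub, map_sub, he, map_zero, sub_self]
        exact Ideal.Quotient.eq_zero_iff_mem.mp hz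
      rw [hspan, Ideal.mem_span_singleton] at hmem
      obtain ⟨b', hb'⟩ := hmem
      exact ⟨b', by rw [← hb']; ring⟩
    choose next hnext using step
    set b : ℕ → A := fun n => Nat.rec a (fun _ bn => next bn) n with hb
    set F : PowerSeries (ZMod p) :=
      PowerSeries.mk (fun n => e (IsLocalRing.residue A (b n))) with hF
    have hdiff : ∀ n, a - S F n = π ^ n * b n := by
      intro n
      induction n with
      | zero => simp [hSsum, hb]
      | succ m ihm =>
        have hy : PowerSeries.coeff m F = e (IsLocalRing.residue A (b m)) := by
          rw [hF, PowerSeries.coeff_mk]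
        have hbm : b m - c (PowerSeries.coeff m F) = π * b (m + 1) := by
          rw [hy]
          have hstep := hnext (b m)
          have hnx : b (m + 1) = next (b m) := rfl
          rw [← hnx] at hstep
          linear_combination hstep
        rw [hSsum, Finset.sum_range_succ, ← hSsum]
        calc a - (S F m + c (PowerSeries.coeff m F) * π ^ m)
            = (a - S F m) - c (PowerSeries.coeff m F) * π ^ m := by ring
          _ = π ^ m * b m - c (PowerSeries.coeff m F) * π ^ m := by rw [ihm]
          _ = π ^ m * (b m - c (PowerSeries.coeff m F)) := by ring
          _ = π ^ m * (π * b (m + 1)) := by rw [hbm]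
          _ = π ^ (m + 1) * b (m + 1) := by ring
    refine ⟨F, ?_⟩
    show L F = a
    refine uniq F a fun n => ?_
    have : S F n - a = -(π ^ n * b n) := by rw [← hdiff n]; ring
    rw [this]
    exact (I ^ n).neg_mem (by simpa [mul_comm] using hpow (b n) n n le_rfl)
  exact ⟨(RingEquiv.ofBijective φ ⟨hinj, hsurj⟩).symm⟩
end

section
/- Let p be a prime, d ≥ 1, m ≥ 2, and let R be a graded (commutative) F_p-algebra such that R_{kd} is a one-dimensional F_p-vector space for 0 ≤ k ≤ m and R_i = 0 for all other i. Suppose there exists x ∈ R_d with x^{m−1} ≠ 0. Then exactly one of the following holds: (1) x^m ≠ 0 and R is isomorphic as a graded F_p-algebra to F_p[x]/(x^{m+1}) with x in degree d; or (2) x^m = 0 and R is isomorphic to the square-zero extension F_p[x]/(x^m) ⊕ F_p·w, where w has degree md and satisfies w·x = 0 and w² = 0. -/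
open Polynomial

lemma aux_coeff_smul {p d : ℕ} (hd : 0 < d) {A : Type*} [CommRing A] [Algebra (ZMod p) A]
    (𝒜 : ℕ → Submodule (ZMod p) A) [GradedAlgebra 𝒜]
    {x : A} (hx : x ∈ 𝒜 d) {n : ℕ} (f : Polynomial (ZMod p)) (hdeg : f.natDegree < n)
    (h0 : Polynomial.aeval x f = 0) {k : ℕ} (hk : k < n) : f.coeff k • x ^ k = 0 := by
  classical
  have hpow : ∀ j : ℕ, x ^ j ∈ 𝒜 (j * d) := fun j => by
    simpa [smul_eq_mul] using SetLike.pow_mem_graded j hx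
  have hsum : ∑ j ∈ Finset.range n, f.coeff j • x ^ j = 0 := by
    rw [← Polynomial.aeval_eq_sum_range' hdeg]; exact h0
  have hdec : ((∑ j ∈ Finset.range n,
      (DirectSum.decompose 𝒜) (f.coeff j • x ^ j)) (k * d) : A) = 0 := by
    rw [← DirectSum.decompose_sum, hsum]; simp
  rw [DFinsupp.finset_sum_apply, AddSubmonoidClass.coe_finset_sum,
    Finset.sum_eq_single k] at hdec
  · rw [← hdec, DirectSum.decompose_of_mem_same 𝒜
      (Submodule.smul_mem _ _ (hpow k))]
  · intro j _ hj
    exact DirectSum.decompose_of_mem_ne 𝒜 (Submodule.smul_mem _ _ (hpow j))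
      (fun h => hj (Nat.eq_of_mul_eq_mul_right hd h))
  · intro h; exact absurd (Finset.mem_range.2 hk) h

lemma aux_dvd {p d : ℕ} [Fact p.Prime] (hd : 0 < d) {A : Type*} [CommRing A] [Algebra (ZMod p) A]
    (𝒜 : ℕ → Submodule (ZMod p) A) [GradedAlgebra 𝒜]
    {x : A} (hx : x ∈ 𝒜 d) {n : ℕ} (_hn : 0 < n) (hxz : x ^ n = 0)
    (hxk : ∀ k < n, x ^ k ≠ 0)
    (f : Polynomial (ZMod p)) (hf : Polynomial.aeval x f = 0) :
    (X : Polynomial (ZMod p)) ^ n ∣ f := by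
  have hmonic : ((X : Polynomial (ZMod p)) ^ n).Monic := monic_X_pow n
  rw [← Polynomial.modByMonic_eq_zero_iff_dvd hmonic]
  set r := f %ₘ (X ^ n) with hr
  by_cases hr0 : r = 0
  · exact hr0
  have hdeg : r.natDegree < n := by
    have := Polynomial.degree_modByMonic_lt f hmonic
    rw [Polynomial.degree_X_pow] at this
    exact (Polynomial.natDegree_lt_iff_degree_lt hr0).2 (by exact_mod_cast this)
  have hrev : Polynomial.aeval x r = 0 := by
    have h1 := Polynomial.modByMonic_add_div f (X ^ n)
    have := congrArg (Polynomial.aeval x) h1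
    rw [map_add, map_mul, map_pow, Polynomial.aeval_X, hxz, zero_mul, add_zero, hf] at this
    exact this
  exfalso
  apply hr0
  ext k
  simp only [Polynomial.coeff_zero]
  by_cases hk : k < n
  · have := aux_coeff_smul hd 𝒜 hx r hdeg hrev hk
    rcases smul_eq_zero.1 this with h | h
    · exact h
    · exact absurd h (hxk k hk)
  · exact Polynomial.coeff_eq_zero_of_natDegree_lt (lt_of_lt_of_le hdeg (by omega))

/-- Let `R` be a graded commutative `F_p`-algebra concentrated in degrees `0, d, 2d, …, md`,
each graded piece one-dimensional, and let `x` be a degree-`d` element with `x^{m-1} ≠ 0`.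
Then exactly one of the following holds: (1) `x^m ≠ 0` and `R ≅ F_p[x]/(x^{m+1})` (with the
generator going to `x`); or (2) `x^m = 0` and `R` is the square-zero extension
`F_p[x]/(x^m) ⊕ F_p·w` with `w` of degree `md`, `w·x = 0` and `w² = 0`. -/
theorem stmt12 (p d m : ℕ) (hp : p.Prime) (hd : 1 ≤ d) (hm : 2 ≤ m)
    (A : Type*) [CommRing A] [Algebra (ZMod p) A]
    (𝒜 : ℕ → Submodule (ZMod p) A) [GradedAlgebra 𝒜]
    (hdim : ∀ k ≤ m, Module.finrank (ZMod p) (𝒜 (k * d)) = 1)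
    (hzero : ∀ i : ℕ, (∀ k ≤ m, i ≠ k * d) → 𝒜 i = ⊥)
    (x : A) (hx : x ∈ 𝒜 d) (hxm1 : x ^ (m - 1) ≠ 0) :
    Xor'
      -- (1) `x^m ≠ 0` and `R ≅ F_p[x]/(x^{m+1})`, `x ↦ x`
      (x ^ m ≠ 0 ∧
        ∃ e : (Polynomial (ZMod p) ⧸
            Ideal.span {(Polynomial.X : Polynomial (ZMod p)) ^ (m + 1)}) ≃ₐ[ZMod p] A,
          e (Ideal.Quotient.mk _ Polynomial.X) = x)
      -- (2) `x^m = 0` and `R` is the square-zero extension `F_p[x]/(x^m) ⊕ F_p·w`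
      (x ^ m = 0 ∧
        ∃ w ∈ 𝒜 (m * d), w ≠ 0 ∧ w * x = 0 ∧ w * w = 0 ∧
          ∃ e : (Polynomial (ZMod p) ⧸
              Ideal.span {(Polynomial.X : Polynomial (ZMod p)) ^ m}) →ₐ[ZMod p] A,
            Function.Injective e ∧ e (Ideal.Quotient.mk _ Polynomial.X) = x ∧
            ∀ a : A, ∃ (q : Polynomial (ZMod p) ⧸
                Ideal.span {(Polynomial.X : Polynomial (ZMod p)) ^ m}) (c : ZMod p),
              a = e q + c • w) := by
  classical
  haveI : Fact p.Prime := ⟨hp⟩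
  have hd0 : 0 < d := hd
  have hpow : ∀ j : ℕ, x ^ j ∈ 𝒜 (j * d) := fun j => by
    simpa [smul_eq_mul] using SetLike.pow_mem_graded j hx
  have hxk : ∀ k ≤ m - 1, x ^ k ≠ 0 := by
    intro k hk h0
    apply hxm1
    have h1 : x ^ (m - 1) = x ^ k * x ^ (m - 1 - k) := by
      rw [← pow_add]; congr 1; omega
    rw [h1, h0, zero_mul]
  -- every 1-dimensional piece is spanned by any nonzero element
  have hgen : ∀ k ≤ m, ∀ y : A, y ∈ 𝒜 (k * d) → y ≠ 0 →
      ∀ a ∈ 𝒜 (k * d), ∃ c : ZMod p, a = c • y := by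
    intro k hk y hy hy0 a ha
    have h1 := hdim k hk
    rw [finrank_eq_one_iff_of_nonzero' (⟨y, hy⟩ : 𝒜 (k * d))
      (by simp [Subtype.ext_iff, hy0])] at h1
    obtain ⟨c, hc⟩ := h1 ⟨a, ha⟩
    refine ⟨c, ?_⟩
    have := congrArg Subtype.val hc
    simpa using this.symm
  -- generator of the top piece
  obtain ⟨w', hw'mem, hw'0⟩ : ∃ w', w' ∈ 𝒜 (m * d) ∧ w' ≠ 0 := by
    by_contra hcon
    push_neg at hcon
    have hbot : 𝒜 (m * d) = ⊥ := by
      rw [Submodule.eq_bot_iff]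
      intro a ha; exact hcon a ha
    have := hdim m le_rfl
    rw [hbot] at this
    simp at this
  -- spanning of A
  have htotal : ∀ a : A, ∃ f : Polynomial (ZMod p), ∃ c : ZMod p,
      a = Polynomial.aeval x f + c • w' := by
    intro a
    set S : Submodule (ZMod p) A :=
      LinearMap.range ((Polynomial.aeval x : Polynomial (ZMod p) →ₐ[ZMod p] A).toLinearMap)
        ⊔ Submodule.span (ZMod p) {w'} with hSdef
    have hle : ∀ i, 𝒜 i ≤ S := by
      intro i
      by_cases hcase : ∀ k ≤ m, i ≠ k * d
      · rw [hzero i hcase]; exact bot_le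
      · push_neg at hcase
        obtain ⟨k, hk, rfl⟩ := hcase
        rcases eq_or_lt_of_le hk with rfl | hklt
        · intro a ha
          obtain ⟨c, rfl⟩ := hgen k le_rfl w' hw'mem hw'0 a ha
          exact Submodule.mem_sup_right (Submodule.smul_mem _ _
            (Submodule.mem_span_singleton_self w'))
        · intro a ha
          obtain ⟨c, rfl⟩ := hgen k hk (x ^ k) (hpow k) (hxk k (by omega)) a ha
          refine Submodule.mem_sup_left ⟨Polynomial.C c * Polynomial.X ^ k, ?_⟩
          simp [Algebra.smul_def]
    have htop : iSup 𝒜 = ⊤ := (DirectSum.Decomposition.isInternal 𝒜).submodule_iSup_eq_top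
    have haS : a ∈ S := by
      have : a ∈ iSup 𝒜 := htop ▸ Submodule.mem_top
      exact (iSup_le hle) this
    rw [hSdef, Submodule.mem_sup] at haS
    obtain ⟨y, hy, z, hz, rfl⟩ := haS
    obtain ⟨f, rfl⟩ := hy
    rw [Submodule.mem_span_singleton] at hz
    obtain ⟨c, rfl⟩ := hz
    exact ⟨f, c, rfl⟩
  -- x^(m+1) = 0
  have hx1 : x ^ (m + 1) = 0 := by
    have hb : 𝒜 ((m + 1) * d) = ⊥ := hzero _ (by
      intro k hk h
      have := Nat.eq_of_mul_eq_mul_right hd0 h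
      omega)
    have := hpow (m + 1)
    rw [hb] at this
    simpa using this
  by_cases hxm : x ^ m = 0
  · -- case 2
    right
    constructor
    · refine ⟨hxm, w', hw'mem, hw'0, ?_, ?_, ?_⟩
      · -- w' * x = 0
        have hmem : w' * x ∈ 𝒜 (m * d + d) := SetLike.mul_mem_graded hw'mem hx
        have hb : 𝒜 (m * d + d) = ⊥ := hzero _ (by
          intro k hk h
          have h2 : m * d + d = (m + 1) * d := by ring
          rw [h2] at h
          have := Nat.eq_of_mul_eq_mul_right hd0 h
          omega)
        rw [hb] at hmem; simpa using hmem
      · -- w' * w' = 0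
        have hmem : w' * w' ∈ 𝒜 (m * d + m * d) := SetLike.mul_mem_graded hw'mem hw'mem
        have hb : 𝒜 (m * d + m * d) = ⊥ := hzero _ (by
          intro k hk h
          have h2 : m * d + m * d = (m + m) * d := by ring
          rw [h2] at h
          have := Nat.eq_of_mul_eq_mul_right hd0 h
          omega)
        rw [hb] at hmem; simpa using hmem
      · -- the algebra map
        have hkerm : ∀ f ∈ Ideal.span {(X : Polynomial (ZMod p)) ^ m},
            Polynomial.aeval x f = 0 := by
          intro f hf
          rw [Ideal.mem_span_singleton] at hf
          obtain ⟨g, rfl⟩ := hf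
          rw [map_mul, map_pow, Polynomial.aeval_X, hxm, zero_mul]
        set e : (Polynomial (ZMod p) ⧸
            Ideal.span {(X : Polynomial (ZMod p)) ^ m}) →ₐ[ZMod p] A :=
          Ideal.Quotient.liftₐ _ (Polynomial.aeval x) hkerm with hedef
        have hemk : ∀ f : Polynomial (ZMod p),
            e (Ideal.Quotient.mk _ f) = Polynomial.aeval x f := by
          intro f
          rw [hedef]; rfl
        refine ⟨e, ?_, ?_, ?_⟩
        · rw [injective_iff_map_eq_zero]
          intro q hq
          obtain ⟨f, rfl⟩ := Ideal.Quotient.mk_surjective q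
          rw [hemk] at hq
          have hdvd := aux_dvd hd0 𝒜 hx (n := m) (by omega) hxm
            (fun k hk => hxk k (by omega)) f hq
          rw [Ideal.Quotient.eq_zero_iff_mem]
          exact Ideal.mem_span_singleton.2 hdvd
        · rw [hemk, Polynomial.aeval_X]
        · intro a
          obtain ⟨f, c, rfl⟩ := htotal a
          exact ⟨Ideal.Quotient.mk _ f, c, by rw [hemk]⟩
    · intro h
      exact h.1 hxm
  · -- case 1
    left
    constructor
    · refine ⟨hxm, ?_⟩
      have hkerm : ∀ f ∈ Ideal.span {(X : Polynomial (ZMod p)) ^ (m + 1)},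
          Polynomial.aeval x f = 0 := by
        intro f hf
        rw [Ideal.mem_span_singleton] at hf
        obtain ⟨g, rfl⟩ := hf
        rw [map_mul, map_pow, Polynomial.aeval_X, hx1, zero_mul]
      set e : (Polynomial (ZMod p) ⧸
          Ideal.span {(X : Polynomial (ZMod p)) ^ (m + 1)}) →ₐ[ZMod p] A :=
        Ideal.Quotient.liftₐ _ (Polynomial.aeval x) hkerm with hedef
      have hemk : ∀ f : Polynomial (ZMod p),
          e (Ideal.Quotient.mk _ f) = Polynomial.aeval x f := by
        intro f
        rw [hedef]; rfl
      have hxk' : ∀ k < m + 1, x ^ k ≠ 0 := by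
        intro k hk
        rcases eq_or_lt_of_le (Nat.lt_succ_iff.1 hk) with rfl | hklt
        · exact hxm
        · exact hxk k (by omega)
      have hinj : Function.Injective e := by
        rw [injective_iff_map_eq_zero]
        intro q hq
        obtain ⟨f, rfl⟩ := Ideal.Quotient.mk_surjective q
        rw [hemk] at hq
        have hdvd := aux_dvd hd0 𝒜 hx (n := m + 1) (by omega) hx1 hxk' f hq
        rw [Ideal.Quotient.eq_zero_iff_mem]
        exact Ideal.mem_span_singleton.2 hdvd
      have hsurj : Function.Surjective e := by
        intro a
        obtain ⟨f, c, rfl⟩ := htotal a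
        obtain ⟨c', hc'⟩ := hgen m le_rfl (x ^ m) (hpow m) hxm w' hw'mem
        refine ⟨Ideal.Quotient.mk _ (f + Polynomial.C (c * c') * Polynomial.X ^ m), ?_⟩
        rw [hemk, map_add, map_mul, Polynomial.aeval_C, map_pow, Polynomial.aeval_X, hc']
        rw [smul_smul, Algebra.smul_def, map_mul]
      refine ⟨AlgEquiv.ofBijective e ⟨hinj, hsurj⟩, ?_⟩
      show e (Ideal.Quotient.mk _ X) = x
      rw [hemk, Polynomial.aeval_X]
    · intro h
      exact hxm h.1
end
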